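/- arXiv:1905.07428 — 3 statements merged into one kernel-verified Lean document; each statement's English description precedes it below -/
import Mathlib

section
/- If (x*, α*) is an optimal solution of the Pascoletti-Serafini scalarization min{α : x ∈ X, z(x) ≤ s + α·d} with s ∈ ℝ² and d ∈ ℝ²₊ \ {0}, then the point y* = s + α*·d agrees with z(x*) in at least one component, i.e., z(x*)₁ = y*₁ or z(x*)₂ = y*₂. -/
/-- Pascoletti–Serafini scalarization: at an optimal solution, `y* = s + α* d`
agrees with `z(x*)` in at least one component. -/
theorem ps_one_common_component {X : Type*} [Nonempty X] (z : X → ℝ × ℝ)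
    (s d : ℝ × ℝ) (hd1 : 0 ≤ d.1) (hd2 : 0 ≤ d.2) (hd : d ≠ 0)
    (xstar : X) (αstar : ℝ)
    (hfeas : (z xstar).1 ≤ s.1 + αstar * d.1 ∧ (z xstar).2 ≤ s.2 + αstar * d.2)
    (hopt : ∀ (x : X) (α : ℝ),
      (z x).1 ≤ s.1 + α * d.1 ∧ (z x).2 ≤ s.2 + α * d.2 → αstar ≤ α) :
    (z xstar).1 = s.1 + αstar * d.1 ∨ (z xstar).2 = s.2 + αstar * d.2 := by
  by_contra h
  push_neg at h
  obtain ⟨h1, h2⟩ := h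
  have hg1 : (z xstar).1 < s.1 + αstar * d.1 := lt_of_le_of_ne hfeas.1 h1
  have hg2 : (z xstar).2 < s.2 + αstar * d.2 := lt_of_le_of_ne hfeas.2 h2
  set g1 := s.1 + αstar * d.1 - (z xstar).1 with hG1
  set g2 := s.2 + αstar * d.2 - (z xstar).2 with hG2
  have hg1' : 0 < g1 := by simp [hG1]; linarith
  have hg2' : 0 < g2 := by simp [hG2]; linarith
  set M := max d.1 d.2 with hM
  have hM1 : d.1 ≤ M := le_max_left _ _
  have hM2 : d.2 ≤ M := le_max_right _ _
  have hM0 : 0 ≤ M := le_trans hd1 hM1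
  set ε := min g1 g2 / (M + 1) with hε
  have hε0 : 0 < ε := div_pos (lt_min hg1' hg2') (by linarith)
  have hεd1 : ε * d.1 ≤ g1 := by
    have : ε * d.1 ≤ ε * (M + 1) := by nlinarith
    have h2' : ε * (M + 1) = min g1 g2 := by
      rw [hε]; exact div_mul_cancel₀ _ (by linarith : (0:ℝ) < M + 1).ne'
    calc ε * d.1 ≤ ε * (M + 1) := this
      _ = min g1 g2 := h2'
      _ ≤ g1 := min_le_left _ _
  have hεd2 : ε * d.2 ≤ g2 := by
    have : ε * d.2 ≤ ε * (M + 1) := by nlinarith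
    have h2' : ε * (M + 1) = min g1 g2 := by
      rw [hε]; exact div_mul_cancel₀ _ (by linarith : (0:ℝ) < M + 1).ne'
    calc ε * d.2 ≤ ε * (M + 1) := this
      _ = min g1 g2 := h2'
      _ ≤ g2 := min_le_right _ _
  have := hopt xstar (αstar - ε) ⟨by nlinarith, by nlinarith⟩
  linarith
end

section
/- Given integers N ≥ 2, C, C₂ with 0 ≤ C₂ ≤ C ≤ N − 2 − C₂, the quantity 3N + C − 3C₂ − 1 satisfies 2N + 1 ≤ 3N + C − 3C₂ − 1 ≤ 4N − 3. Moreover the upper bound is attained at C₂ = 0, C = N−2, and when N is even the lower bound is attained at C = C₂ = (N−2)/2. -/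
/-- Bounds on the number of mixed integer programs solved by Algorithm 1:
`2N + 1 ≤ 3N + C − 3C₂ − 1 ≤ 4N − 3`, the upper bound being attained at
`C₂ = 0, C = N − 2`, and (for even `N`) the lower bound at
`C = C₂ = (N − 2)/2`. -/
theorem algorithm1_bounds (N C C2 : ℤ)
    (hN : 2 ≤ N) (h0 : 0 ≤ C2) (hC2C : C2 ≤ C) (hCN : C ≤ N - 2 - C2) :
    (2 * N + 1 ≤ 3 * N + C - 3 * C2 - 1 ∧ 3 * N + C - 3 * C2 - 1 ≤ 4 * N - 3) ∧
    (3 * N + (N - 2) - 3 * 0 - 1 = 4 * N - 3) ∧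
    (∀ C' : ℤ, 2 * C' = N - 2 → 3 * N + C' - 3 * C' - 1 = 2 * N + 1) := by
  refine ⟨⟨by linarith, by linarith⟩, by ring, fun C' h => by linarith⟩
end

section
/- Let (α^b, x^b) be an optimal solution of the Pascoletti-Serafini scalarization over a box with reference point s^b and direction d ≥ 0, d ≠ 0. Then the half-open region R = {y ∈ ℝ² : s^b ≤ y and y < s^b + α^b·d componentwise} contains no feasible objective vector z(x̃) for x̃ satisfying the box constraints; in particular, R contains no nondominated point of the restricted problem. -/
/-- The half-open region `R = {y : s^b ≤ y, y < s^b + α^b d}` contains no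
feasible objective vector of the box-constrained problem, where `(α^b, x^b)` is
optimal for the box-restricted Pascoletti–Serafini scalarization. -/
theorem ps_box_empty_region {X : Type*} [Nonempty X] (z : X → ℝ × ℝ)
    (s d : ℝ × ℝ) (hd1 : 0 ≤ d.1) (hd2 : 0 ≤ d.2) (hd : d ≠ 0)
    (p1 t2 ε : ℝ)
    (xb : X) (αb : ℝ)
    (hfeas : ((z xb).1 ≤ s.1 + αb * d.1 ∧ (z xb).2 ≤ s.2 + αb * d.2) ∧
             (z xb).1 ≤ p1 - ε ∧ (z xb).2 ≤ t2 - ε)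
    (hopt : ∀ (x : X) (α : ℝ),
      ((z x).1 ≤ s.1 + α * d.1 ∧ (z x).2 ≤ s.2 + α * d.2) →
      (z x).1 ≤ p1 - ε → (z x).2 ≤ t2 - ε → αb ≤ α) :
    ¬ ∃ x : X, ((z x).1 ≤ p1 - ε ∧ (z x).2 ≤ t2 - ε) ∧
      (s.1 ≤ (z x).1 ∧ s.2 ≤ (z x).2) ∧
      ((z x).1 < s.1 + αb * d.1 ∧ (z x).2 < s.2 + αb * d.2) := by
  rintro ⟨x, ⟨hb1, hb2⟩, ⟨hs1, hs2⟩, ⟨hu1, hu2⟩⟩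
  rcases eq_or_lt_of_le hd1 with h1 | h1
  · rw [← h1, mul_zero] at hu1; linarith
  rcases eq_or_lt_of_le hd2 with h2 | h2
  · rw [← h2, mul_zero] at hu2; linarith
  set α₁ := ((z x).1 - s.1) / d.1 with hα₁
  set α₂ := ((z x).2 - s.2) / d.2 with hα₂
  have hα₁lt : α₁ < αb := by rw [hα₁, div_lt_iff₀ h1]; linarith
  have hα₂lt : α₂ < αb := by rw [hα₂, div_lt_iff₀ h2]; linarith
  have hle := hopt x (max α₁ α₂)
    ⟨by
      have : (z x).1 ≤ s.1 + α₁ * d.1 := by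
        rw [hα₁, div_mul_cancel₀ _ (ne_of_gt h1)]; linarith
      nlinarith [le_max_left α₁ α₂],
     by
      have : (z x).2 ≤ s.2 + α₂ * d.2 := by
        rw [hα₂, div_mul_cancel₀ _ (ne_of_gt h2)]; linarith
      nlinarith [le_max_right α₁ α₂]⟩ hb1 hb2
  have : max α₁ α₂ < αb := max_lt hα₁lt hα₂lt
  linarith
end
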